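/- For all integers n, m ≥ 1, f(n+m−1) ≥ f(n)·f(m), where f(k) is the maximum size of a Condorcet domain on k alternatives. -/

import Mathlib

/-- The majority relation of a profile `P` of `k` voters: `a` beats `b` if more voters
rank `a` above `b` than rank `b` above `a`. -/
def Maj {α : Type*} {k : ℕ} (P : Fin k → α → α → Prop) (a b : α) : Prop :=
  Nat.card {i : Fin k // P i a b} > Nat.card {i : Fin k // P i b a}

/-- `D` is a Condorcet domain: a set of linear orders (strict total orders) on the
alternatives such that every profile with an odd number of voters drawn from `D`
has a transitive majority relation. -/
def IsCondorcetDomain {α : Type*} (D : Set (α → α → Prop)) : Prop :=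
  (∀ r ∈ D, IsStrictTotalOrder α r) ∧
  ∀ (k : ℕ), Odd k → ∀ P : Fin k → α → α → Prop,
    (∀ i, P i ∈ D) → Transitive (Maj P)

/-- `maxCD n` is the maximum size of a Condorcet domain on `n` alternatives. -/
noncomputable def maxCD (n : ℕ) : ℕ :=
  sSup {s : ℕ | ∃ D : Set (Fin n → Fin n → Prop), IsCondorcetDomain D ∧ s = Nat.card D}

/- ### Auxiliary development for Fishburn superadditivity -/

/-- Fishburn's concatenation of two orders: substitute the whole order `r2` (as a block)
for the alternative `n-1` of `r1`. Alternatives with value `< n-1` are compared by `r1`,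
those with value `≥ n-1` by `r2` (shifted), and a cross pair is compared via the position
of the `A`-element relative to `n-1` in `r1`. -/
def concatRel {n m : ℕ} (r1 : Fin n → Fin n → Prop) (r2 : Fin m → Fin m → Prop)
    (z w : Fin (n + m - 1)) : Prop :=
  if hz : (z : ℕ) < n - 1 then
    if hw : (w : ℕ) < n - 1 then r1 ⟨z, by omega⟩ ⟨w, by omega⟩
    else r1 ⟨z, by omega⟩ ⟨n - 1, by omega⟩
  else
    if hw : (w : ℕ) < n - 1 then r1 ⟨n - 1, by omega⟩ ⟨w, by omega⟩
    else r2 ⟨(z : ℕ) - (n - 1), by have := z.isLt; omega⟩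
           ⟨(w : ℕ) - (n - 1), by have := w.isLt; omega⟩

lemma concatRel_trans {n m : ℕ} {M1 : Fin n → Fin n → Prop} {M2 : Fin m → Fin m → Prop}
    (h1 : Transitive M1) (ha : ∀ a b, M1 a b → M1 b a → False) (h2 : Transitive M2) :
    Transitive (concatRel M1 M2) := by
  intro z w u hzw hwu
  by_cases hz : (z : ℕ) < n - 1 <;> by_cases hw : (w : ℕ) < n - 1 <;>
    by_cases hu : (u : ℕ) < n - 1 <;>
    simp only [concatRel, dif_pos, dif_neg, hz, hw, hu, not_false_iff, dite_true,
      dite_false] at hzw hwu ⊢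
  · exact h1 hzw hwu
  · exact h1 hzw hwu
  · exact h1 hzw hwu
  · exact hzw
  · exact h1 hzw hwu
  · exact (ha _ _ hzw hwu).elim
  · exact hwu
  · exact h2 hzw hwu

lemma maj_asymm {α : Type*} {k : ℕ} {P : Fin k → α → α → Prop} {a b : α}
    (h : Maj P a b) (h' : Maj P b a) : False := by
  unfold Maj at h h'; omega

lemma maj_congr {α β : Type*} {k : ℕ} {P : Fin k → α → α → Prop}
    {Q : Fin k → β → β → Prop} {a b : α} {c d : β}
    (h1 : ∀ i, P i a b ↔ Q i c d) (h2 : ∀ i, P i b a ↔ Q i d c) :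
    Maj P a b ↔ Maj Q c d := by
  unfold Maj
  rw [Nat.card_congr (Equiv.subtypeEquivRight h1), Nat.card_congr (Equiv.subtypeEquivRight h2)]

/-- The majority relation of a profile of concatenated orders is the concatenation of
the majority relations. -/
lemma maj_concat {n m k : ℕ} {P : Fin k → Fin (n + m - 1) → Fin (n + m - 1) → Prop}
    {σ : Fin k → Fin n → Fin n → Prop} {τ : Fin k → Fin m → Fin m → Prop}
    (hP : ∀ i, P i = concatRel (σ i) (τ i)) (z w : Fin (n + m - 1)) :
    Maj P z w ↔ concatRel (Maj σ) (Maj τ) z w := by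
  by_cases hz : (z : ℕ) < n - 1 <;> by_cases hw : (w : ℕ) < n - 1 <;>
    simp only [concatRel, dif_pos, dif_neg, hz, hw, not_false_iff, dite_true, dite_false] <;>
    refine maj_congr (fun i => ?_) (fun i => ?_) <;> rw [hP i] <;>
    simp only [concatRel, dif_pos, dif_neg, hz, hw, not_false_iff, dite_true, dite_false]

lemma concatRel_isSTO {n m : ℕ} {r1 : Fin n → Fin n → Prop} {r2 : Fin m → Fin m → Prop}
    (h1 : IsStrictTotalOrder (Fin n) r1) (h2 : IsStrictTotalOrder (Fin m) r2) :
    IsStrictTotalOrder (Fin (n + m - 1)) (concatRel r1 r2) := by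
  have h1t : Transitive r1 := fun a b c => h1.trans a b c
  have h2t : Transitive r2 := fun a b c => h2.trans a b c
  have h1a : ∀ a b, r1 a b → r1 b a → False :=
    fun a b hab hba => h1.irrefl a (h1.trans _ _ _ hab hba)
  refine { trichotomous := ?_, irrefl := ?_, trans := fun a b c hab hbc => concatRel_trans h1t h1a h2t hab hbc }
  · intro a b
    suffices H : concatRel r1 r2 a b ∨ a = b ∨ concatRel r1 r2 b a from
      fun hab hba => (H.resolve_left hab).resolve_right hba
    by_cases ha : (a : ℕ) < n - 1 <;> by_cases hb : (b : ℕ) < n - 1 <;>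
      simp only [concatRel, dif_pos, dif_neg, ha, hb, not_false_iff, dite_true, dite_false]
    · rcases (haveI := h1; trichotomous_of r1 ⟨a, by omega⟩ ⟨b, by omega⟩) with h | h | h
      · exact Or.inl h
      · exact Or.inr (Or.inl (Fin.ext (by simpa [Fin.ext_iff] using h)))
      · exact Or.inr (Or.inr h)
    · rcases (haveI := h1; trichotomous_of r1 ⟨a, by omega⟩ ⟨n - 1, by omega⟩) with h | h | h
      · exact Or.inl h
      · exact absurd (by simpa [Fin.ext_iff] using h) (by omega)
      · exact Or.inr (Or.inr h)
    · rcases (haveI := h1; trichotomous_of r1 ⟨n - 1, by omega⟩ ⟨b, by omega⟩) with h | h | h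
      · exact Or.inl h
      · exact absurd (by simpa [Fin.ext_iff] using h) (by omega)
      · exact Or.inr (Or.inr h)
    · rcases (haveI := h2; trichotomous_of r2 ⟨(a : ℕ) - (n - 1), by have := a.isLt; omega⟩
        ⟨(b : ℕ) - (n - 1), by have := b.isLt; omega⟩) with h | h | h
      · exact Or.inl h
      · refine Or.inr (Or.inl (Fin.ext ?_))
        have := (Fin.ext_iff).mp h
        simp only at this
        omega
      · exact Or.inr (Or.inr h)
  · intro a h
    by_cases ha : (a : ℕ) < n - 1 <;>
      simp only [concatRel, dif_pos, dif_neg, ha, not_false_iff, dite_true, dite_false] at h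
    · exact h1.irrefl _ h
    · exact h2.irrefl _ h

lemma concatRel_B {n m : ℕ} (hn : 1 ≤ n) (r1 : Fin n → Fin n → Prop)
    (r2 : Fin m → Fin m → Prop) (j j' : Fin m) :
    concatRel r1 r2 ⟨n - 1 + j, by have := j.isLt; omega⟩
      ⟨n - 1 + j', by have := j'.isLt; omega⟩ = r2 j j' := by
  simp only [concatRel]
  rw [dif_neg (by omega), dif_neg (by omega)]
  congr 1 <;> exact Fin.ext (by simp)

lemma concatRel_A {n m : ℕ} (hm : 1 ≤ m) {r1 : Fin n → Fin n → Prop}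
    {r2 : Fin m → Fin m → Prop} (h1 : IsStrictTotalOrder (Fin n) r1)
    (h2 : IsStrictTotalOrder (Fin m) r2) (i j : Fin n) :
    concatRel r1 r2 ⟨i, by have := i.isLt; omega⟩ ⟨j, by have := j.isLt; omega⟩ ↔ r1 i j := by
  have hi' := i.isLt; have hj' := j.isLt
  by_cases hi : (i : ℕ) < n - 1 <;> by_cases hj : (j : ℕ) < n - 1
  · simp only [concatRel, dif_pos hi, dif_pos hj, Fin.eta]
  · have hx : (⟨n - 1, by omega⟩ : Fin n) = j := Fin.ext (show n - 1 = (j : ℕ) by omega)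
    simp only [concatRel, dif_pos hi, dif_neg hj, Fin.eta]
    rw [hx]
  · have hx : (⟨n - 1, by omega⟩ : Fin n) = i := Fin.ext (show n - 1 = (i : ℕ) by omega)
    simp only [concatRel, dif_neg hi, dif_pos hj, Fin.eta]
    rw [hx]
  · have hij : i = j := Fin.ext (by omega)
    simp only [concatRel, dif_neg hi, dif_neg hj]
    constructor
    · intro h
      rw [show (⟨(i : ℕ) - (n - 1), by omega⟩ : Fin m) =
          ⟨(j : ℕ) - (n - 1), by omega⟩ from Fin.ext
          (show (i : ℕ) - (n - 1) = (j : ℕ) - (n - 1) by omega)] at h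
      exact (h2.irrefl _ h).elim
    · intro h
      exact (h1.irrefl _ (hij ▸ h)).elim

lemma cd_bddAbove (k : ℕ) :
    BddAbove {s : ℕ | ∃ D : Set (Fin k → Fin k → Prop), IsCondorcetDomain D ∧ s = Nat.card D} := by
  refine ⟨Nat.card (Fin k → Fin k → Prop), ?_⟩
  rintro s ⟨D, -, rfl⟩
  exact Nat.card_le_card_of_injective _ Subtype.val_injective

lemma cd_nonempty (k : ℕ) :
    {s : ℕ | ∃ D : Set (Fin k → Fin k → Prop),
      IsCondorcetDomain D ∧ s = Nat.card D}.Nonempty := by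
  refine ⟨0, ∅, ⟨fun r hr => hr.elim, fun k hk P hP => (hP ⟨0, hk.pos⟩).elim⟩, by simp⟩

lemma maxCD_mem (k : ℕ) :
    maxCD k ∈ {s : ℕ | ∃ D : Set (Fin k → Fin k → Prop),
      IsCondorcetDomain D ∧ s = Nat.card D} :=
  Nat.sSup_mem (cd_nonempty k) (cd_bddAbove k)

/-- Fishburn's superadditivity: `f(n+m-1) ≥ f(n)·f(m)`. -/
theorem maxCD_fishburn_superadditive (n m : ℕ) (hn : 1 ≤ n) (hm : 1 ≤ m) :
    maxCD n * maxCD m ≤ maxCD (n + m - 1) := by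
  classical
  obtain ⟨D1, hD1, h1⟩ := maxCD_mem n
  obtain ⟨D2, hD2, h2⟩ := maxCD_mem m
  set F : (Fin n → Fin n → Prop) × (Fin m → Fin m → Prop) →
      (Fin (n + m - 1) → Fin (n + m - 1) → Prop) := fun p => concatRel p.1 p.2 with hF
  set D : Set (Fin (n + m - 1) → Fin (n + m - 1) → Prop) := F '' (D1 ×ˢ D2) with hD
  have hCD : IsCondorcetDomain D := by
    constructor
    · rintro r ⟨⟨r1, r2⟩, ⟨hr1, hr2⟩, rfl⟩
      exact concatRel_isSTO (hD1.1 r1 hr1) (hD2.1 r2 hr2)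
    · intro k hk P hP
      simp only [hD, Set.mem_image, Set.mem_prod] at hP
      choose p hp hpc using hP
      have hP' : ∀ i, P i = concatRel ((p i).1) ((p i).2) := fun i => (hpc i).symm
      have hM1 : Transitive (Maj fun i => (p i).1) :=
        hD1.2 k hk _ (fun i => (hp i).1)
      have hM2 : Transitive (Maj fun i => (p i).2) :=
        hD2.2 k hk _ (fun i => (hp i).2)
      intro z w u hzw hwu
      rw [maj_concat hP'] at hzw hwu ⊢
      exact concatRel_trans hM1 (fun a b => maj_asymm) hM2 hzw hwu
  have hinj : Set.InjOn F (D1 ×ˢ D2) := by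
    rintro ⟨r1, r2⟩ hr ⟨s1, s2⟩ hs heq
    simp only [Set.mem_prod] at hr hs
    have heq' : concatRel r1 r2 = concatRel s1 s2 := heq
    have hr1 := hD1.1 r1 hr.1
    have hr2 := hD2.1 r2 hr.2
    have hs1 := hD1.1 s1 hs.1
    have hs2 := hD2.1 s2 hs.2
    have e2 : r2 = s2 := by
      funext j j'
      have := congrFun (congrFun heq' ⟨n - 1 + j, by have := j.isLt; omega⟩)
        ⟨n - 1 + j', by have := j'.isLt; omega⟩
      rwa [concatRel_B hn, concatRel_B hn] at this
    have e1 : r1 = s1 := by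
      funext i j
      have := congrFun (congrFun heq' ⟨i, by have := i.isLt; omega⟩)
        ⟨j, by have := j.isLt; omega⟩
      have l : r1 i j ↔ s1 i j := by
        rw [← concatRel_A hm hr1 hr2 i j, ← concatRel_A hm hs1 hs2 i j, heq']
      exact propext l
    simp [e1, e2]
  have hcard : Nat.card D = Nat.card D1 * Nat.card D2 := by
    have : Nat.card D = Nat.card ↥(D1 ×ˢ D2) := by
      rw [Nat.card_coe_set_eq, Nat.card_coe_set_eq, hD,
        Set.ncard_image_of_injOn hinj]
    rw [this, Nat.card_congr (Equiv.Set.prod D1 D2), Nat.card_prod]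
  have : Nat.card D ∈ {s : ℕ | ∃ D' : Set (Fin (n + m - 1) → Fin (n + m - 1) → Prop),
      IsCondorcetDomain D' ∧ s = Nat.card D'} := ⟨D, hCD, rfl⟩
  calc maxCD n * maxCD m = Nat.card D := by rw [h1, h2, hcard]
    _ ≤ maxCD (n + m - 1) := le_csSup (cd_bddAbove _) this
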